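/- arXiv:1012.5171 — 4 statements merged into one kernel-verified Lean document; each statement's English description precedes it below -/
import Mathlib

section
/- Let A, B be n×n positive semidefinite complex matrices such that for every k = 1, …, n the sum of the k smallest eigenvalues of A is at least the sum of the k smallest eigenvalues of B (super-majorization A ≺^w B). Then ‖A‖_! ≥ ‖B‖_! for every symmetric anti-norm ‖·‖_!. -/
open scoped Matrix ComplexOrder

/-- A symmetric anti-norm on the cone of positive semidefinite complex matrices. -/
def IsSymmetricAntiNorm {k : Type*} [Fintype k] [DecidableEq k]
    (N : Matrix k k ℂ → ℝ) : Prop :=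
  (∀ A : Matrix k k ℂ, A.PosSemidef → 0 ≤ N A) ∧
  (∀ (c : ℝ), 0 ≤ c → ∀ A : Matrix k k ℂ, A.PosSemidef → N (c • A) = c * N A) ∧
  (∀ A B : Matrix k k ℂ, A.PosSemidef → B.PosSemidef → N A + N B ≤ N (A + B)) ∧
  (∀ (U A : Matrix k k ℂ), U ∈ Matrix.unitaryGroup k ℂ → A.PosSemidef →
    N (U * A * Uᴴ) = N A)

/-- The eigenvalues of a positive semidefinite complex matrix, sorted in increasing
order (so the k smallest ones come first). -/
noncomputable def sortedEigenvalues {n : ℕ} (A : Matrix (Fin n) (Fin n) ℂ)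
    (hA : A.PosSemidef) : Fin n → ℝ :=
  hA.isHermitian.eigenvalues ∘ Tuple.sort hA.isHermitian.eigenvalues

/- ### Auxiliary lemmas -/

private lemma sum_Iic_fin {n : ℕ} (f : Fin n → ℝ) (k : Fin n) :
    ∑ j : Fin (k.1 + 1), f (Fin.castLE k.2 j) = ∑ m ∈ Finset.Iic k, f m := by
  refine Finset.sum_bij' (fun a _ => Fin.castLE k.2 a)
    (fun m hm => ⟨m.1, by have h := Finset.mem_Iic.mp hm; rw [Fin.le_def] at h; omega⟩)
    (fun a _ => ?_) (fun m hm => Finset.mem_univ _)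
    (fun a _ => by ext; simp) (fun m hm => by ext; simp) (fun a _ => rfl)
  have := a.2
  simp only [Finset.mem_Iic, Fin.le_def, Fin.coe_castLE]
  omega

/-- The key vector-level lemma: a symmetric, monotone, "Robin-Hood-transfer"-increasing
functional on nonnegative vectors respects weak super-majorization of sorted vectors. -/
private lemma antiNorm_vec {n : ℕ} (g : (Fin n → ℝ) → ℝ)
    (hmono : ∀ x y : Fin n → ℝ, (∀ i, 0 ≤ x i) → x ≤ y → g x ≤ g y)
    (htrans : ∀ x : Fin n → ℝ, (∀ i, 0 ≤ x i) → ∀ s : ℝ, 0 ≤ s → s ≤ 1 →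
      ∀ i j : Fin n, g x ≤ g ((1 - s) • x + s • (x ∘ Equiv.swap i j))) :
    ∀ (M : ℕ) (a b : Fin n → ℝ), (∀ i, 0 ≤ a i) → (∀ i, 0 ≤ b i) →
      Monotone a → Monotone b →
      (∀ k : Fin n, ∑ m ∈ Finset.Iic k, b m ≤ ∑ m ∈ Finset.Iic k, a m) →
      (Finset.univ.filter fun m => b m ≠ a m).card ≤ M → g b ≤ g a := by
  intro M
  induction M with
  | zero =>
    intro a b ha0 hb0 _ _ _ hcard
    have hba : b = a := by
      funext m
      by_contra hm
      have hmem : m ∈ Finset.univ.filter fun m => b m ≠ a m := by simp [hm]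
      have := Finset.card_pos.mpr ⟨m, hmem⟩
      omega
    rw [hba]
  | succ M ih =>
    intro a b ha0 hb0 ha hb hmaj hcard
    by_cases hba : ∀ m, b m ≤ a m
    · exact hmono b a hb0 hba
    push_neg at hba
    classical
    -- minimal index `j` with `a j < b j`
    set Js := Finset.univ.filter (fun m => a m < b m) with hJs
    have hJne : Js.Nonempty := ⟨hba.choose, by simp [hJs, hba.choose_spec]⟩
    set j := Js.min' hJne with hjdef
    have hjmem : a j < b j := by
      have h := Js.min'_mem hJne
      exact (Finset.mem_filter.mp h).2
    have hminj : ∀ m, m < j → b m ≤ a m := by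
      intro m hm
      by_contra h
      push_neg at h
      have hmem : m ∈ Js := by simp [hJs, h]
      exact absurd (Js.min'_le m hmem) (not_le.mpr hm)
    -- there is `i < j` with `b i < a i`
    have hex : ∃ i, i < j ∧ b i < a i := by
      by_contra h
      push_neg at h
      have heq : ∀ m, m < j → b m - a m = 0 := fun m hm =>
        sub_eq_zero.mpr (le_antisymm (hminj m hm) (h m hm))
      have h1 : ∑ m ∈ Finset.Iic j, (b m - a m) = b j - a j := by
        refine Finset.sum_eq_single j (fun m hm hmj => heq m ?_) (fun hj => absurd (Finset.mem_Iic.mpr le_rfl) hj)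
        exact lt_of_le_of_ne (Finset.mem_Iic.mp hm) hmj
      rw [Finset.sum_sub_distrib] at h1
      have h2 := hmaj j
      linarith
    -- maximal such `i`
    set Is := Finset.univ.filter (fun m => m < j ∧ b m < a m) with hIs
    have hIne : Is.Nonempty := ⟨hex.choose, by simp [hIs, hex.choose_spec.1, hex.choose_spec.2]⟩
    set i := Is.max' hIne with hidef
    have himem : i < j ∧ b i < a i := by
      have h := Is.max'_mem hIne
      exact ((Finset.mem_filter.mp h).2 : _ < j ∧ _)
    obtain ⟨hij, hbia⟩ := himem
    have hmaxi : ∀ m, i < m → m < j → a m ≤ b m := by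
      intro m h1 h2
      by_contra h
      push_neg at h
      have hmem : m ∈ Is := by simp [hIs, h2, h]
      exact absurd (Is.le_max' m hmem) (not_le.mpr h1)
    have haij : a i ≤ a j := ha hij.le
    have hbij : b i < b j := by linarith
    set t := min (a i - b i) (b j - a j) with htdef
    have ht1 : t ≤ a i - b i := min_le_left _ _
    have ht2 : t ≤ b j - a j := min_le_right _ _
    have ht0 : 0 < t := lt_min (by linarith) (by linarith)
    have h2t : 2 * t ≤ b j - b i := by
      have : t + t ≤ (a i - b i) + (b j - a j) := add_le_add ht1 ht2
      linarith
    set b' : Fin n → ℝ := fun m => if m = i then b i + t else if m = j then b j - t else b m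
      with hb'def
    have hji : i ≠ j := ne_of_lt hij
    have hb'i : b' i = b i + t := by simp [hb'def]
    have hb'j : b' j = b j - t := by simp [hb'def, hji.symm]
    have hb'other : ∀ m, m ≠ i → m ≠ j → b' m = b m := by
      intro m h1 h2; simp [hb'def, h1, h2]
    have hb'ia : b' i ≤ a i := by rw [hb'i]; linarith
    have hb'ja : a j ≤ b' j := by rw [hb'j]; linarith
    -- `g b ≤ g b'` via a Robin Hood transfer
    have hbji : 0 < b j - b i := by linarith
    set s := t / (b j - b i) with hsdef
    have hs0 : 0 ≤ s := div_nonneg ht0.le hbji.le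
    have hs1 : s ≤ 1 := by rw [div_le_one hbji]; linarith
    have hst : s * (b j - b i) = t := div_mul_cancel₀ t hbji.ne'
    have hb'eq : b' = (1 - s) • b + s • (b ∘ Equiv.swap i j) := by
      funext m
      simp only [Pi.add_apply, Pi.smul_apply, smul_eq_mul, Function.comp_apply]
      have hst' : s * b j - s * b i = t := by rw [← hst]; ring
      rcases eq_or_ne m i with hmi | hmi
      · rw [hmi, hb'i, Equiv.swap_apply_left]; linarith [hst']
      rcases eq_or_ne m j with hmj | hmj
      · rw [hmj, hb'j, Equiv.swap_apply_right]; linarith [hst']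
      · rw [hb'other m hmi hmj, Equiv.swap_apply_of_ne_of_ne hmi hmj]; ring
    have hstep : g b ≤ g b' := by
      rw [hb'eq]; exact htrans b hb0 s hs0 hs1 i j
    -- properties of b'
    have hb'0 : ∀ m, 0 ≤ b' m := by
      intro m
      rcases eq_or_ne m i with hmi | hmi
      · rw [hmi, hb'i]; linarith [hb0 i]
      rcases eq_or_ne m j with hmj | hmj
      · rw [hmj, hb'j]; linarith [ha0 j]
      · rw [hb'other m hmi hmj]; exact hb0 m
    have hb'mono : Monotone b' := by
      intro m m' hmm'
      by_cases h1 : m' = i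
      · by_cases h2 : m = m'
        · rw [h2]
        · have hmlt : m < i := h1 ▸ lt_of_le_of_ne hmm' h2
          rw [h1, hb'other m (h1 ▸ h2) (hmlt.trans hij).ne, hb'i]
          linarith [hb hmlt.le, ht0.le]
      by_cases h2 : m = i
      · have hmlt : i < m' := h2 ▸ lt_of_le_of_ne hmm' (fun h => h1 (h2 ▸ h.symm ▸ rfl))
        by_cases h3 : m' = j
        · rw [h2, h3, hb'i, hb'j]; linarith
        rcases lt_or_gt_of_ne h3 with h4 | h4
        · rw [h2, hb'i, hb'other m' h1 h3]
          have h5 := hmaxi m' hmlt h4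
          linarith [ha hmlt.le]
        · rw [h2, hb'i, hb'other m' h1 h3]
          have h5 := hb h4.le
          linarith [ha hij.le]
      by_cases h3 : m' = j
      · by_cases h4 : m = m'
        · rw [h4]
        · have hmlt : m < j := h3 ▸ lt_of_le_of_ne hmm' h4
          rw [h3, hb'other m h2 (h3 ▸ h4), hb'j]
          linarith [hminj m hmlt, ha hmlt.le]
      by_cases h4 : m = j
      · have hmlt : j < m' := h4 ▸ lt_of_le_of_ne hmm' (fun h => h3 (h4 ▸ h.symm ▸ rfl))
        rw [h4, hb'j, hb'other m' h1 h3]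
        linarith [hb hmlt.le]
      · rw [hb'other m h2 h4, hb'other m' h1 h3]
        exact hb hmm'
    have hptw : ∀ m, b' m = b m + (if m = i then t else 0) - (if m = j then t else 0) := by
      intro m
      rcases eq_or_ne m i with rfl | h1
      · simp [hb'i, hji]
      rcases eq_or_ne m j with rfl | h2
      · simp [hb'j, h1]
      · simp [hb'other m h1 h2, h1, h2]
    have hsum : ∀ S : Finset (Fin n), ∑ m ∈ S, b' m
        = ∑ m ∈ S, b m + (if i ∈ S then t else 0) - (if j ∈ S then t else 0) := by
      intro S
      simp only [hptw, Finset.sum_sub_distrib, Finset.sum_add_distrib]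
      rw [Finset.sum_ite_eq' S i (fun _ => t), Finset.sum_ite_eq' S j (fun _ => t)]
    have hb'maj : ∀ k : Fin n, ∑ m ∈ Finset.Iic k, b' m ≤ ∑ m ∈ Finset.Iic k, a m := by
      intro k
      rcases le_or_gt j k with hjk | hjk
      · rw [hsum]
        have hiI : i ∈ Finset.Iic k := Finset.mem_Iic.mpr (hij.le.trans hjk)
        have hjI : j ∈ Finset.Iic k := Finset.mem_Iic.mpr hjk
        rw [if_pos hiI, if_pos hjI]
        have := hmaj k
        linarith
      · have hjI : j ∉ Finset.Iic k := by simpa using not_le.mpr hjk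
        rw [hsum, if_neg hjI]
        rcases le_or_gt i k with hik | hik
        · have hiI : i ∈ Finset.Iic k := Finset.mem_Iic.mpr hik
          rw [if_pos hiI]
          have key : ∑ m ∈ Finset.Iic k, b m + t
              = ∑ m ∈ Finset.Iic k, (b m + if m = i then t else 0) := by
            rw [Finset.sum_add_distrib, Finset.sum_ite_eq' _ i (fun _ => t), if_pos hiI]
          rw [sub_zero, key]
          refine Finset.sum_le_sum fun m hm => ?_
          have hmj : m < j := lt_of_le_of_lt (Finset.mem_Iic.mp hm) hjk
          rcases eq_or_ne m i with rfl | hmi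
          · rw [if_pos rfl]; linarith
          · rw [if_neg hmi, add_zero]; exact hminj m hmj
        · have hiI : i ∉ Finset.Iic k := by simpa using not_le.mpr hik
          rw [if_neg hiI, sub_zero, add_zero]
          refine Finset.sum_le_sum fun m hm => ?_
          exact hminj m (lt_of_le_of_lt (Finset.mem_Iic.mp hm) hjk)
    have hsub : (Finset.univ.filter fun m => b' m ≠ a m)
        ⊆ Finset.univ.filter fun m => b m ≠ a m := by
      intro m hm
      simp only [Finset.mem_filter, Finset.mem_univ, true_and] at hm ⊢
      rcases eq_or_ne m i with rfl | h1
      · exact hbia.ne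
      rcases eq_or_ne m j with rfl | h2
      · exact hjmem.ne'
      · rwa [hb'other m h1 h2] at hm
    have hwit : ∃ w, w ∈ (Finset.univ.filter fun m => b m ≠ a m)
        ∧ w ∉ (Finset.univ.filter fun m => b' m ≠ a m) := by
      rcases le_or_gt (a i - b i) (b j - a j) with hc | hc
      · refine ⟨i, by simp [hbia.ne], ?_⟩
        have : b' i = a i := by rw [hb'i, htdef, min_eq_left hc]; ring
        simp [this]
      · refine ⟨j, by simp [hjmem.ne'], ?_⟩
        have : b' j = a j := by rw [hb'j, htdef, min_eq_right hc.le]; ring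
        simp [this]
    have hb'card : (Finset.univ.filter fun m => b' m ≠ a m).card ≤ M := by
      obtain ⟨w, hw1, hw2⟩ := hwit
      have hss : (Finset.univ.filter fun m => b' m ≠ a m)
          ⊆ (Finset.univ.filter fun m => b m ≠ a m).erase w :=
        Finset.subset_erase.mpr ⟨hsub, hw2⟩
      have h1 := Finset.card_le_card hss
      rw [Finset.card_erase_of_mem hw1] at h1
      have h2 : 1 ≤ (Finset.univ.filter fun m => b m ≠ a m).card :=
        Finset.card_pos.mpr ⟨w, hw1⟩
      omega
    exact hstep.trans (ih a b' ha0 hb'0 ha hb'mono hb'maj hb'card)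

private lemma diag_psd {n : ℕ} (x : Fin n → ℝ) (hx : ∀ i, 0 ≤ x i) :
    (Matrix.diagonal fun i => (x i : ℂ)).PosSemidef :=
  Matrix.posSemidef_diagonal_iff.mpr fun i => by exact_mod_cast hx i

private lemma permMatrix_conjTranspose {n : ℕ} (σ : Equiv.Perm (Fin n)) :
    (σ.permMatrix ℂ)ᴴ = (σ⁻¹).permMatrix ℂ := by
  ext i j
  simp only [Matrix.conjTranspose_apply, Equiv.Perm.permMatrix,
    PEquiv.toMatrix_toPEquiv_eq, Matrix.submatrix_apply, id, Matrix.one_apply]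
  by_cases h : σ j = i
  · have h2 : σ⁻¹ i = j := by simp [← h]
    simp [h, h2]
  · have h2 : σ⁻¹ i ≠ j := fun hc => h (by simp [← hc])
    simp [h]; exact h2

private lemma permMatrix_mem_unitaryGroup {n : ℕ} (σ : Equiv.Perm (Fin n)) :
    σ.permMatrix ℂ ∈ Matrix.unitaryGroup (Fin n) ℂ := by
  rw [Matrix.mem_unitaryGroup_iff]
  have : star (σ.permMatrix ℂ) = (σ⁻¹).permMatrix ℂ := permMatrix_conjTranspose σ
  rw [this, Equiv.Perm.permMatrix, PEquiv.toMatrix_toPEquiv_mul]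
  ext i j
  simp [PEquiv.toMatrix_toPEquiv_eq, Matrix.one_apply, Equiv.toPEquiv_apply, eq_comm]

private lemma permMatrix_conj_diagonal {n : ℕ} (σ : Equiv.Perm (Fin n)) (d : Fin n → ℂ) :
    σ.permMatrix ℂ * Matrix.diagonal d * (σ.permMatrix ℂ)ᴴ = Matrix.diagonal (d ∘ σ) := by
  rw [permMatrix_conjTranspose, Equiv.Perm.permMatrix, Equiv.Perm.permMatrix,
    PEquiv.toMatrix_toPEquiv_mul, PEquiv.mul_toMatrix_toPEquiv,
    Matrix.submatrix_submatrix]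
  have h1 : ((σ : Fin n → Fin n) ∘ id) = (σ : Fin n → Fin n) := Function.comp_id _
  have h2 : ((id : Fin n → Fin n) ∘ ((σ⁻¹).symm : Fin n → Fin n)) = (σ : Fin n → Fin n) := by
    funext x; rfl
  rw [h1, h2]
  exact Matrix.submatrix_diagonal_equiv d σ

/-- If `A ≺^w B`, i.e. for every `k` the sum of the `k` smallest
eigenvalues of `A` dominates that of `B`, then `‖A‖_! ≥ ‖B‖_!` for every symmetric
anti-norm. -/
theorem antiNorm_superMajorization {n : ℕ}
    (A B : Matrix (Fin n) (Fin n) ℂ) (hA : A.PosSemidef) (hB : B.PosSemidef)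
    (hmaj : ∀ (k : ℕ) (hk : k ≤ n),
      ∑ j : Fin k, sortedEigenvalues B hB (Fin.castLE hk j) ≤
        ∑ j : Fin k, sortedEigenvalues A hA (Fin.castLE hk j))
    (N : Matrix (Fin n) (Fin n) ℂ → ℝ) (hN : IsSymmetricAntiNorm N) :
    N B ≤ N A := by
  obtain ⟨hN0, hNhom, hNadd, hNU⟩ := hN
  set g : (Fin n → ℝ) → ℝ := fun x => N (Matrix.diagonal fun i => (x i : ℂ)) with hg
  have hDadd : ∀ x y : Fin n → ℝ,
      (Matrix.diagonal fun i => ((x i + y i : ℝ) : ℂ))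
        = (Matrix.diagonal fun i => (x i : ℂ)) + (Matrix.diagonal fun i => (y i : ℂ)) := by
    intro x y
    ext i j
    rcases eq_or_ne i j with rfl | h
    · simp only [Matrix.add_apply, Matrix.diagonal_apply_eq]
      push_cast
      ring
    · simp [Matrix.add_apply, Matrix.diagonal_apply_ne _ h]
  have hDsmul : ∀ (c : ℝ) (x : Fin n → ℝ),
      (Matrix.diagonal fun i => ((c * x i : ℝ) : ℂ))
        = c • (Matrix.diagonal fun i => (x i : ℂ)) := by
    intro c x
    ext i j
    rcases eq_or_ne i j with rfl | h
    · simp only [Matrix.smul_apply, Matrix.diagonal_apply_eq, Complex.real_smul]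
      push_cast
      ring
    · simp [Matrix.smul_apply, Matrix.diagonal_apply_ne _ h]
  have hmono : ∀ x y : Fin n → ℝ, (∀ i, 0 ≤ x i) → x ≤ y → g x ≤ g y := by
    intro x y hx hxy
    have hyx : ∀ i, 0 ≤ (y - x) i := fun i => sub_nonneg.mpr (hxy i)
    have hkey := hNadd _ _ (diag_psd x hx) (diag_psd (y - x) hyx)
    have hrw : (Matrix.diagonal fun i => (x i : ℂ))
        + (Matrix.diagonal fun i => ((y - x) i : ℂ))
        = Matrix.diagonal fun i => (y i : ℂ) := by
      rw [← hDadd x (y - x)]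
      congr 1 with i
      push_cast [Pi.sub_apply]
      ring
    rw [hrw] at hkey
    have hpos := hN0 _ (diag_psd (y - x) hyx)
    simp only [hg]
    linarith
  have hgperm : ∀ (σ : Equiv.Perm (Fin n)) (x : Fin n → ℝ), (∀ i, 0 ≤ x i) →
      g (x ∘ σ) = g x := by
    intro σ x hx
    have hD : (Matrix.diagonal fun i => ((x ∘ σ) i : ℂ))
        = σ.permMatrix ℂ * (Matrix.diagonal fun i => (x i : ℂ)) * (σ.permMatrix ℂ)ᴴ := by
      rw [permMatrix_conj_diagonal]
      rfl
    simp only [hg]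
    rw [hD]
    exact hNU _ _ (permMatrix_mem_unitaryGroup σ) (diag_psd x hx)
  have htrans : ∀ x : Fin n → ℝ, (∀ i, 0 ≤ x i) → ∀ s : ℝ, 0 ≤ s → s ≤ 1 →
      ∀ i j : Fin n, g x ≤ g ((1 - s) • x + s • (x ∘ Equiv.swap i j)) := by
    intro x hx s hs0 hs1 i j
    have hx' : ∀ m, 0 ≤ (x ∘ Equiv.swap i j) m := fun m => hx _
    have h1 : ∀ m, 0 ≤ ((1 - s) • x) m := fun m => mul_nonneg (by linarith) (hx m)
    have h2 : ∀ m, 0 ≤ (s • (x ∘ Equiv.swap i j)) m := fun m => mul_nonneg hs0 (hx' m)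
    have e1 : (Matrix.diagonal fun m => (((1 - s) • x) m : ℂ))
        = (1 - s) • (Matrix.diagonal fun m => (x m : ℂ)) := hDsmul (1 - s) x
    have e2 : (Matrix.diagonal fun m => ((s • (x ∘ Equiv.swap i j)) m : ℂ))
        = s • (Matrix.diagonal fun m => ((x ∘ Equiv.swap i j) m : ℂ)) :=
      hDsmul s (x ∘ Equiv.swap i j)
    have hD : (Matrix.diagonal fun m => ((((1 - s) • x + s • (x ∘ Equiv.swap i j)) m : ℝ) : ℂ))
        = (1 - s) • (Matrix.diagonal fun m => (x m : ℂ))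
          + s • (Matrix.diagonal fun m => ((x ∘ Equiv.swap i j) m : ℂ)) := by
      rw [← e1, ← e2]
      exact hDadd ((1 - s) • x) (s • (x ∘ Equiv.swap i j))
    have hkey := hNadd _ _ (e1 ▸ diag_psd _ h1) (e2 ▸ diag_psd _ h2)
    have hh1 := hNhom (1 - s) (by linarith) _ (diag_psd x hx)
    have hh2 := hNhom s hs0 _ (diag_psd _ hx')
    have hperm := hgperm (Equiv.swap i j) x hx
    simp only [hg] at hperm ⊢
    calc N (Matrix.diagonal fun m => (x m : ℂ))
        = (1 - s) * N (Matrix.diagonal fun m => (x m : ℂ))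
          + s * N (Matrix.diagonal fun m => ((x ∘ Equiv.swap i j) m : ℂ)) := by
          rw [hperm]; ring
      _ ≤ N ((1 - s) • (Matrix.diagonal fun m => (x m : ℂ))
            + s • (Matrix.diagonal fun m => ((x ∘ Equiv.swap i j) m : ℂ))) := by
          rw [← hh1, ← hh2]; exact hkey
      _ = _ := (congrArg N hD).symm
  -- reduce `N` to `g` of sorted eigenvalues
  have hred : ∀ (C : Matrix (Fin n) (Fin n) ℂ) (hC : C.PosSemidef),
      N C = g (sortedEigenvalues C hC) := by
    intro C hC
    have hpsd := diag_psd _ hC.eigenvalues_nonneg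
    have hu := hNU (hC.isHermitian.eigenvectorUnitary : Matrix (Fin n) (Fin n) ℂ)
      _ hC.isHermitian.eigenvectorUnitary.2 hpsd
    have h1 : N C = N (Matrix.diagonal fun i => (hC.isHermitian.eigenvalues i : ℂ)) := by
      conv_lhs => rw [hC.isHermitian.spectral_theorem]
      rw [← Matrix.star_eq_conjTranspose
        (hC.isHermitian.eigenvectorUnitary : Matrix (Fin n) (Fin n) ℂ)] at hu
      exact hu
    have h2 := hgperm (Tuple.sort hC.isHermitian.eigenvalues)
      hC.isHermitian.eigenvalues hC.eigenvalues_nonneg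
    rw [h1]
    exact h2.symm
  rw [hred A hA, hred B hB]
  refine antiNorm_vec g hmono htrans
    ((Finset.univ.filter fun m => sortedEigenvalues B hB m ≠ sortedEigenvalues A hA m).card)
    _ _ (fun i => hA.eigenvalues_nonneg _) (fun i => hB.eigenvalues_nonneg _)
    (Tuple.monotone_sort _) (Tuple.monotone_sort _) (fun k => ?_) le_rfl
  have := hmaj (k.1 + 1) k.2
  rw [sum_Iic_fin, sum_Iic_fin] at this
  exact this
end

section
/- Let g : [0,∞) → [0,∞) be convex with g(0) = 0 and let q ∈ (0,1) be such that g^q is subadditive, i.e. g(a+b)^q ≤ g(a)^q + g(b)^q for all a, b ≥ 0. Then for every m×m positive semidefinite complex matrix A = [a_{ij}], Tr g(A) ≤ (∑_{i=1}^m g(a_{ii})^q)^{1/q}. -/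
open scoped Matrix ComplexOrder

private lemma superadd_of_convex (g : ℝ → ℝ) (hg_convex : ConvexOn ℝ (Set.Ici 0) g)
    (hg0 : g 0 = 0) (x y : ℝ) (hx : 0 ≤ x) (hy : 0 ≤ y) : g x + g y ≤ g (x + y) := by
  rcases eq_or_lt_of_le (add_nonneg hx hy) with h | h
  · have hx0 : x = 0 := by linarith
    have hy0 : y = 0 := by linarith
    simp [hx0, hy0, hg0]
  · have key : ∀ a b : ℝ, 0 ≤ a → 0 ≤ b → a + b = x + y → g a ≤ (a / (x+y)) * g (x+y) := by
      intro a b ha hb hab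
      have h1 : g ((a / (x+y)) • (x+y) + (b / (x+y)) • (0:ℝ)) ≤
          (a / (x+y)) • g (x+y) + (b / (x+y)) • g 0 :=
        hg_convex.2 (Set.mem_Ici.2 h.le) (Set.mem_Ici.2 le_rfl)
          (div_nonneg ha h.le) (div_nonneg hb h.le)
          (by rw [← add_div, hab, div_self h.ne'])
      have h2 : (a / (x+y)) • (x+y) + (b / (x+y)) • (0:ℝ) = a := by
        simp [smul_eq_mul, div_mul_cancel₀, h.ne']
      rw [h2, hg0] at h1
      simpa using h1
    have k1 := key x y hx hy rfl
    have k2 := key y x hy hx (by ring)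
    have : x / (x+y) * g (x+y) + y / (x+y) * g (x+y) = g (x+y) := by
      field_simp
    linarith

private lemma cfc_trace_eq {m : ℕ} (f : ℝ → ℝ) (A : Matrix (Fin m) (Fin m) ℂ)
    (hH : A.IsHermitian) : (cfc f A).trace = ∑ i, (f (hH.eigenvalues i) : ℂ) := by
  rw [hH.cfc_eq, Matrix.IsHermitian.cfc, Unitary.conjStarAlgAut_apply, Matrix.trace_mul_cycle,
    Unitary.coe_star_mul_self, Matrix.one_mul, Matrix.trace_diagonal]
  rfl

private lemma trace_eq_sum_eigs {m : ℕ} (A : Matrix (Fin m) (Fin m) ℂ)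
    (hH : A.IsHermitian) : A.trace = ∑ i, (hH.eigenvalues i : ℂ) := by
  conv_lhs => rw [hH.spectral_theorem]
  rw [Unitary.conjStarAlgAut_apply, Matrix.trace_mul_cycle, Unitary.coe_star_mul_self,
    Matrix.one_mul, Matrix.trace_diagonal]
  rfl

/-- If `g : [0,∞) → [0,∞)` is convex with `g(0)=0` and `q ∈ (0,1)` is
such that `g^q` is subadditive, then for every positive semidefinite `A = [a_{ij}]`,
`Tr g(A) ≤ (∑ i, g(a_{ii})^q)^{1/q}`. -/
theorem trace_convex_diagonal_bound {m : ℕ} (g : ℝ → ℝ)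
    (hg_nonneg : ∀ x ∈ Set.Ici (0:ℝ), 0 ≤ g x)
    (hg_convex : ConvexOn ℝ (Set.Ici 0) g)
    (hg0 : g 0 = 0)
    (q : ℝ) (hq0 : 0 < q) (hq1 : q < 1)
    (hgq_subadd : ∀ a b : ℝ, 0 ≤ a → 0 ≤ b → g (a + b) ^ q ≤ g a ^ q + g b ^ q)
    (A : Matrix (Fin m) (Fin m) ℂ) (hA : A.PosSemidef) :
    (cfc g A).trace.re ≤ (∑ i, g ((A i i).re) ^ q) ^ (1 / q) := by
  have hH := hA.1
  set lam := hH.eigenvalues with hlam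
  have hlam_nonneg : ∀ i, 0 ≤ lam i := fun i => hA.eigenvalues_nonneg i
  -- Step 1: trace of cfc g A is the sum of g over eigenvalues
  have h1 : (cfc g A).trace.re = ∑ i, g (lam i) := by
    rw [cfc_trace_eq g A hH]
    simp
    rfl
  -- Step 2: superadditivity over the sum of eigenvalues
  have h2 : ∀ (s : Finset (Fin m)), ∑ i ∈ s, g (lam i) ≤ g (∑ i ∈ s, lam i) := by
    intro s
    induction s using Finset.cons_induction with
    | empty => simp [hg0]
    | cons a s ha ih =>
      rw [Finset.sum_cons, Finset.sum_cons]
      calc g (lam a) + ∑ i ∈ s, g (lam i) ≤ g (lam a) + g (∑ i ∈ s, lam i) := by linarith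
        _ ≤ g (lam a + ∑ i ∈ s, lam i) :=
          superadd_of_convex g hg_convex hg0 _ _ (hlam_nonneg a)
            (Finset.sum_nonneg fun i _ => hlam_nonneg i)
  -- Step 3: the sum of eigenvalues is the sum of diagonal real parts
  have hdiag_nonneg : ∀ i, 0 ≤ (A i i).re := by
    intro i
    have : (0:ℂ) ≤ A i i := hA.diag_nonneg
    exact (Complex.le_def.mp this).1
  have h3 : ∑ i, lam i = ∑ i, (A i i).re := by
    have := congrArg Complex.re (trace_eq_sum_eigs A hH)
    simp only [Matrix.trace, Matrix.diag] at this ⊢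
    simpa using this.symm
  -- Step 4: subadditivity of g^q over the diagonal sum
  have h4 : ∀ (s : Finset (Fin m)),
      g (∑ i ∈ s, (A i i).re) ^ q ≤ ∑ i ∈ s, g ((A i i).re) ^ q := by
    intro s
    induction s using Finset.cons_induction with
    | empty => simp [hg0, Real.zero_rpow hq0.ne']
    | cons a s ha ih =>
      rw [Finset.sum_cons, Finset.sum_cons]
      calc g ((A a a).re + ∑ i ∈ s, (A i i).re) ^ q
          ≤ g ((A a a).re) ^ q + g (∑ i ∈ s, (A i i).re) ^ q :=
            hgq_subadd _ _ (hdiag_nonneg a) (Finset.sum_nonneg fun i _ => hdiag_nonneg i)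
        _ ≤ g ((A a a).re) ^ q + ∑ i ∈ s, g ((A i i).re) ^ q := by linarith
  -- Combine
  have hgT_nonneg : 0 ≤ g (∑ i, (A i i).re) :=
    hg_nonneg _ (Set.mem_Ici.2 (Finset.sum_nonneg fun i _ => hdiag_nonneg i))
  have h5 : g (∑ i, (A i i).re) ≤ (∑ i, g ((A i i).re) ^ q) ^ (1 / q) := by
    have := Real.rpow_le_rpow (Real.rpow_nonneg hgT_nonneg q) (h4 Finset.univ)
      (le_of_lt (by positivity) : (0:ℝ) ≤ 1 / q)
    rw [one_div, Real.rpow_rpow_inv hgT_nonneg hq0.ne'] at this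
    rw [one_div]
    exact this
  calc (cfc g A).trace.re = ∑ i, g (lam i) := h1
    _ ≤ g (∑ i, lam i) := h2 Finset.univ
    _ = g (∑ i, (A i i).re) := by rw [h3]
    _ ≤ _ := h5
end

section
/- Let h : [0,∞) → [0,∞) be superadditive (h(a+b) ≥ h(a) + h(b) for all a, b ≥ 0), strictly positive and twice continuously differentiable on (0,∞), with (log h)''(t) < 0 for all t > 0. Then for all n×n positive semidefinite complex matrices A, B, det(h(A+B))^{1/n} ≥ det(h(A))^{1/n} + det(h(B))^{1/n}. -/
open scoped Matrix ComplexOrder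

open Finset in
private lemma mahler_aux {n : ℕ} (hn : 0 < n) (x y : Fin n → ℝ)
    (hx : ∀ i, 0 < x i) (hy : ∀ i, 0 < y i) :
    (∏ i, x i) ^ (1/(n:ℝ)) + (∏ i, y i) ^ (1/(n:ℝ)) ≤ (∏ i, (x i + y i)) ^ (1/(n:ℝ)) := by
  have hxy : ∀ i, 0 < x i + y i := fun i => add_pos (hx i) (hy i)
  have hP : 0 < ∏ i, (x i + y i) := Finset.prod_pos fun i _ => hxy i
  have hw : ∑ _i : Fin n, (1/(n:ℝ)) = 1 := by
    simp [Finset.sum_const]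
    field_simp
  have key : ∀ z : Fin n → ℝ, (∀ i, 0 < z i) →
      (∏ i, z i) ^ (1/(n:ℝ)) / (∏ i, (x i + y i)) ^ (1/(n:ℝ)) ≤
        ∑ i, (1/(n:ℝ)) * (z i / (x i + y i)) := by
    intro z hz
    have h1 : (∏ i, z i) ^ (1/(n:ℝ)) / (∏ i, (x i + y i)) ^ (1/(n:ℝ))
        = ∏ i, (z i / (x i + y i)) ^ (1/(n:ℝ)) := by
      rw [← Real.div_rpow (Finset.prod_nonneg fun i _ => (hz i).le) hP.le,
        ← Finset.prod_div_distrib,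
        ← Real.finset_prod_rpow _ _ (fun i _ => div_nonneg (hz i).le (hxy i).le)]
    rw [h1]
    exact Real.geom_mean_le_arith_mean_weighted _ _ _
      (fun i _ => by positivity) hw (fun i _ => div_nonneg (hz i).le (hxy i).le)
  have hsum : (∑ i, (1/(n:ℝ)) * (x i / (x i + y i))) +
      (∑ i, (1/(n:ℝ)) * (y i / (x i + y i))) = 1 := by
    rw [← Finset.sum_add_distrib]
    calc (∑ i, ((1/(n:ℝ)) * (x i / (x i + y i)) + (1/(n:ℝ)) * (y i / (x i + y i))))
        = ∑ _i : Fin n, (1/(n:ℝ)) := by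
          refine Finset.sum_congr rfl fun i _ => ?_
          rw [← mul_add, ← add_div, div_self (hxy i).ne']
          ring
      _ = 1 := hw
  have := add_le_add (key x hx) (key y hy)
  rw [hsum, ← add_div, div_le_one (by positivity)] at this
  exact this


section hfacts
variable {h : ℝ → ℝ}

private lemma h_zero (h_nonneg : ∀ x ∈ Set.Ici (0:ℝ), 0 ≤ h x)
    (h_superadd : ∀ a b : ℝ, 0 ≤ a → 0 ≤ b → h a + h b ≤ h (a + b)) : h 0 = 0 := by
  have := h_superadd 0 0 le_rfl le_rfl
  have h0 := h_nonneg 0 Set.self_mem_Ici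
  simp only [add_zero] at this
  linarith

private lemma h_mono (h_nonneg : ∀ x ∈ Set.Ici (0:ℝ), 0 ≤ h x)
    (h_superadd : ∀ a b : ℝ, 0 ≤ a → 0 ≤ b → h a + h b ≤ h (a + b)) :
    ∀ x y : ℝ, 0 ≤ x → x ≤ y → h x ≤ h y := by
  intro x y hx hxy
  have h1 := h_superadd x (y - x) hx (by linarith)
  have h2 := h_nonneg (y - x) (by simp; linarith)
  have : x + (y - x) = y := by ring
  rw [this] at h1
  linarith

private lemma h_cwa (h_nonneg : ∀ x ∈ Set.Ici (0:ℝ), 0 ≤ h x)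
    (h_superadd : ∀ a b : ℝ, 0 ≤ a → 0 ≤ b → h a + h b ≤ h (a + b))
    (h_C2 : ContDiffOn ℝ 2 h (Set.Ioi 0)) :
    ∀ x : ℝ, 0 ≤ x → ContinuousWithinAt h (Set.Ici 0) x := by
  intro x hx
  rcases eq_or_lt_of_le hx with rfl | hx'
  · -- continuity at 0
    have hkey : ∀ k : ℕ, (2:ℝ)^k * h (1 / 2^k) ≤ h 1 := by
      intro k
      induction k with
      | zero => simp
      | succ k ih =>
        have hs : (0:ℝ) ≤ 1 / 2^(k+1) := by positivity
        have := h_superadd (1/2^(k+1)) (1/2^(k+1)) hs hs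
        have heq : (1:ℝ)/2^(k+1) + 1/2^(k+1) = 1/2^k := by ring
        rw [heq] at this
        have h2 : (2:ℝ)^(k+1) * h (1/2^(k+1)) ≤ (2:ℝ)^k * h (1/2^k) := by
          have hp : (0:ℝ) < 2^k := by positivity
          calc (2:ℝ)^(k+1) * h (1/2^(k+1)) = 2^k * (h (1/2^(k+1)) + h (1/2^(k+1))) := by ring
            _ ≤ 2^k * h (1/2^k) := by nlinarith
        linarith
    rw [ContinuousWithinAt, h_zero h_nonneg h_superadd]
    rw [Metric.tendsto_nhdsWithin_nhds]
    intro ε hε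
    obtain ⟨k, hk⟩ := pow_unbounded_of_one_lt (h 1 / ε) (by norm_num : (1:ℝ) < 2)
    refine ⟨1/2^k, by positivity, fun {t} ht hd => ?_⟩
    have htle : t ≤ 1/2^k := by
      rw [Real.dist_eq, sub_zero] at hd
      exact le_of_lt (lt_of_abs_lt hd)
    have h1 : h t ≤ h (1/2^k) := h_mono h_nonneg h_superadd t _ ht htle
    have h2 : h (1/2^k) ≤ h 1 / 2^k := by
      have := hkey k
      have hp : (0:ℝ) < 2^k := by positivity
      rw [le_div_iff₀ hp]
      linarith
    have h3 : h 1 / 2^k < ε := by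
      have hp : (0:ℝ) < 2^k := by positivity
      rw [div_lt_iff₀ hp]
      calc h 1 = (h 1 / ε) * ε := by field_simp
        _ < 2^k * ε := by exact mul_lt_mul_of_pos_right hk hε
        _ = ε * 2^k := by ring
    have h0 : 0 ≤ h t := h_nonneg t ht
    rw [Real.dist_eq, sub_zero, abs_of_nonneg h0]
    linarith
  · exact (h_C2.continuousOn.continuousAt (Ioi_mem_nhds hx')).continuousWithinAt

private lemma logh_concave (h_pos : ∀ t ∈ Set.Ioi (0:ℝ), 0 < h t)
    (h_C2 : ContDiffOn ℝ 2 h (Set.Ioi 0))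
    (h_logconcave : ∀ t ∈ Set.Ioi (0:ℝ),
      deriv (deriv (fun s => Real.log (h s))) t < 0) :
    ConcaveOn ℝ (Set.Ioi 0) (fun s => Real.log (h s)) := by
  refine (strictConcaveOn_of_deriv2_neg (convex_Ioi 0)
    (ContinuousOn.log h_C2.continuousOn fun x hx => (h_pos x hx).ne') ?_).concaveOn
  intro x hx
  rw [interior_Ioi] at hx
  have : deriv^[2] (fun s => Real.log (h s)) = deriv (deriv (fun s => Real.log (h s))) := by
    simp [Function.iterate_succ, Function.iterate_zero]
  rw [this]
  exact h_logconcave x hx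

end hfacts


private lemma jensen_prod {n : ℕ} {h : ℝ → ℝ}
    (h_pos : ∀ t ∈ Set.Ioi (0:ℝ), 0 < h t)
    (gcc : ConcaveOn ℝ (Set.Ioi 0) (fun s => Real.log (h s)))
    (α : Fin n → ℝ) (hα : ∀ j, 0 < α j)
    (s : Fin n → Fin n → ℝ) (hs0 : ∀ i j, 0 ≤ s i j)
    (hrow : ∀ i, ∑ j, s i j = 1) (hcol : ∀ j, ∑ i, s i j = 1)
    (a : Fin n → ℝ) (ha : ∀ i, a i = ∑ j, s i j * α j) :
    (∀ i, 0 < a i) ∧ ∏ j, h (α j) ≤ ∏ i, h (a i) := by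
  have hmin : ∃ c > 0, ∀ j, c ≤ α j := by
    rcases Nat.eq_zero_or_pos n with rfl | hn
    · exact ⟨1, one_pos, fun j => j.elim0⟩
    · have : Nonempty (Fin n) := ⟨⟨0, hn⟩⟩
      obtain ⟨j0, -, hj0⟩ := Finset.exists_min_image Finset.univ α ⟨Classical.arbitrary _, Finset.mem_univ _⟩
      exact ⟨α j0, hα j0, fun j => hj0 j (Finset.mem_univ j)⟩
  obtain ⟨c, hc, hcle⟩ := hmin
  have hapos : ∀ i, 0 < a i := by
    intro i
    have : c = ∑ j, s i j * c := by
      rw [← Finset.sum_mul, hrow, one_mul]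
    have hle : c ≤ a i := by
      rw [this, ha]
      exact Finset.sum_le_sum fun j _ => mul_le_mul_of_nonneg_left (hcle j) (hs0 i j)
    linarith
  refine ⟨hapos, ?_⟩
  -- Jensen per row
  have key : ∀ i, ∑ j, s i j * Real.log (h (α j)) ≤ Real.log (h (a i)) := by
    intro i
    have := gcc.le_map_sum (t := Finset.univ) (w := s i) (p := α)
      (fun j _ => hs0 i j) (hrow i) (fun j _ => hα j)
    simpa [smul_eq_mul, ← ha i] using this
  have hsum : ∑ j, Real.log (h (α j)) ≤ ∑ i, Real.log (h (a i)) := by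
    calc ∑ j, Real.log (h (α j)) = ∑ j, (∑ i, s i j) * Real.log (h (α j)) := by
          simp [hcol]
      _ = ∑ i, ∑ j, s i j * Real.log (h (α j)) := by
          rw [Finset.sum_comm]
          simp [Finset.sum_mul]
      _ ≤ ∑ i, Real.log (h (a i)) := Finset.sum_le_sum fun i _ => key i
  have hexp : ∀ (v : Fin n → ℝ), (∀ i, 0 < v i) →
      ∏ i, h (v i) = Real.exp (∑ i, Real.log (h (v i))) := by
    intro v hv
    rw [Real.exp_sum]
    exact Finset.prod_congr rfl fun i _ => (Real.exp_log (h_pos _ (hv i))).symm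
  rw [hexp α hα, hexp a hapos]
  exact Real.exp_le_exp.mpr hsum


private lemma scalar_core {n : ℕ} (hn : 0 < n) {h : ℝ → ℝ}
    (h_superadd : ∀ a b : ℝ, 0 ≤ a → 0 ≤ b → h a + h b ≤ h (a + b))
    (h_pos : ∀ t ∈ Set.Ioi (0:ℝ), 0 < h t)
    (gcc : ConcaveOn ℝ (Set.Ioi 0) (fun s => Real.log (h s)))
    (α β : Fin n → ℝ) (hα : ∀ j, 0 < α j) (hβ : ∀ j, 0 < β j)
    (s t : Fin n → Fin n → ℝ) (hs0 : ∀ i j, 0 ≤ s i j) (ht0 : ∀ i j, 0 ≤ t i j)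
    (hsrow : ∀ i, ∑ j, s i j = 1) (hscol : ∀ j, ∑ i, s i j = 1)
    (htrow : ∀ i, ∑ j, t i j = 1) (htcol : ∀ j, ∑ i, t i j = 1)
    (a b : Fin n → ℝ) (ha : ∀ i, a i = ∑ j, s i j * α j) (hb : ∀ i, b i = ∑ j, t i j * β j) :
    (∏ j, h (α j)) ^ (1/(n:ℝ)) + (∏ j, h (β j)) ^ (1/(n:ℝ)) ≤
      (∏ i, h (a i + b i)) ^ (1/(n:ℝ)) := by
  obtain ⟨hapos, hA⟩ := jensen_prod h_pos gcc α hα s hs0 hsrow hscol a ha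
  obtain ⟨hbpos, hB⟩ := jensen_prod h_pos gcc β hβ t ht0 htrow htcol b hb
  have hr : 0 ≤ 1/(n:ℝ) := by positivity
  have h1 : (∏ j, h (α j)) ^ (1/(n:ℝ)) ≤ (∏ i, h (a i)) ^ (1/(n:ℝ)) :=
    Real.rpow_le_rpow (Finset.prod_nonneg fun j _ => (h_pos _ (hα j)).le) hA hr
  have h2 : (∏ j, h (β j)) ^ (1/(n:ℝ)) ≤ (∏ i, h (b i)) ^ (1/(n:ℝ)) :=
    Real.rpow_le_rpow (Finset.prod_nonneg fun j _ => (h_pos _ (hβ j)).le) hB hr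
  have h3 := mahler_aux hn (fun i => h (a i)) (fun i => h (b i))
    (fun i => h_pos _ (hapos i)) (fun i => h_pos _ (hbpos i))
  have h4 : (∏ i, (h (a i) + h (b i))) ^ (1/(n:ℝ)) ≤ (∏ i, h (a i + b i)) ^ (1/(n:ℝ)) := by
    refine Real.rpow_le_rpow (Finset.prod_nonneg fun i _ =>
      (add_pos (h_pos _ (hapos i)) (h_pos _ (hbpos i))).le) ?_ hr
    exact Finset.prod_le_prod (fun i _ => (add_pos (h_pos _ (hapos i)) (h_pos _ (hbpos i))).le)
      (fun i _ => h_superadd _ _ (hapos i).le (hbpos i).le)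
  linarith


open scoped Matrix ComplexOrder

private lemma det_cfc_re {n : ℕ} {m : Matrix (Fin n) (Fin n) ℂ} (hm : m.IsHermitian)
    (f : ℝ → ℝ) : (cfc f m).det.re = ∏ i, f (hm.eigenvalues i) := by
  rw [hm.cfc_eq, Matrix.IsHermitian.cfc]
  simp only [Unitary.conjStarAlgAut_apply, Unitary.coe_star]
  rw [Matrix.det_mul_right_comm,
    (Matrix.mem_unitaryGroup_iff).mp hm.eigenvectorUnitary.2, one_mul, Matrix.det_diagonal]
  rw [show (∏ i, (RCLike.ofReal ∘ f ∘ hm.eigenvalues) i) = ((∏ i, f (hm.eigenvalues i) : ℝ) : ℂ)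
    by push_cast; rfl]
  exact Complex.ofReal_re _

private lemma conj_diag_decomp {n : ℕ} {A : Matrix (Fin n) (Fin n) ℂ} (hA : A.IsHermitian)
    (U : Matrix.unitaryGroup (Fin n) ℂ) :
    ∃ s : Fin n → Fin n → ℝ, (∀ i j, 0 ≤ s i j) ∧ (∀ i, ∑ j, s i j = 1) ∧
      (∀ j, ∑ i, s i j = 1) ∧
      ∀ i, ((star (U : Matrix (Fin n) (Fin n) ℂ) * A * U) i i).re
        = ∑ j, s i j * hA.eigenvalues j := by
  set V : Matrix (Fin n) (Fin n) ℂ := (hA.eigenvectorUnitary : Matrix (Fin n) (Fin n) ℂ) with hV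
  set W : Matrix (Fin n) (Fin n) ℂ := star V * (U : Matrix (Fin n) (Fin n) ℂ) with hW
  have hVmem : V * star V = 1 := (Matrix.mem_unitaryGroup_iff).mp hA.eigenvectorUnitary.2
  have hVmem' : star V * V = 1 := (Matrix.mem_unitaryGroup_iff').mp hA.eigenvectorUnitary.2
  have hUmem : (U : Matrix (Fin n) (Fin n) ℂ) * star (U : Matrix (Fin n) (Fin n) ℂ) = 1 :=
    (Matrix.mem_unitaryGroup_iff).mp U.2
  have hUmem' : star (U : Matrix (Fin n) (Fin n) ℂ) * (U : Matrix (Fin n) (Fin n) ℂ) = 1 :=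
    (Matrix.mem_unitaryGroup_iff').mp U.2
  have hsW : star W = star (U : Matrix (Fin n) (Fin n) ℂ) * V := by
    rw [hW, star_mul, star_star]
  have hWW : star W * W = 1 := by
    rw [hsW, hW, Matrix.mul_assoc, ← Matrix.mul_assoc V _ _, hVmem, Matrix.one_mul, hUmem']
  have hWW' : W * star W = 1 := by
    rw [hsW, hW, Matrix.mul_assoc, ← Matrix.mul_assoc _ _ V, hUmem, Matrix.one_mul, hVmem']
  refine ⟨fun i j => Complex.normSq (W j i), fun i j => Complex.normSq_nonneg _, ?_, ?_, ?_⟩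
  · intro i
    have := congr_fun (congr_fun hWW i) i
    rw [Matrix.mul_apply] at this
    simp only [Matrix.conjTranspose_apply, Matrix.one_apply_eq] at this
    have : ∑ j, ((Complex.normSq (W j i) : ℂ)) = 1 := by
      rw [← this]
      exact Finset.sum_congr rfl fun j _ => by
        rw [Matrix.star_apply, Complex.star_def, ← Complex.normSq_eq_conj_mul_self]
    calc ∑ j, Complex.normSq (W j i)
        = (∑ j, ((Complex.normSq (W j i) : ℂ))).re := by
          rw [Complex.re_sum]; exact Finset.sum_congr rfl fun j _ => rfl
      _ = 1 := by rw [this]; rfl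
  · intro j
    have := congr_fun (congr_fun hWW' j) j
    rw [Matrix.mul_apply] at this
    simp only [Matrix.conjTranspose_apply, Matrix.one_apply_eq] at this
    have h2 : ∑ i, ((Complex.normSq (W j i) : ℂ)) = 1 := by
      rw [← this]
      exact Finset.sum_congr rfl fun i _ => by
        rw [Matrix.star_apply, Complex.star_def, Complex.mul_conj]
    calc ∑ i, Complex.normSq (W j i)
        = (∑ i, ((Complex.normSq (W j i) : ℂ))).re := by
          rw [Complex.re_sum]; exact Finset.sum_congr rfl fun i _ => rfl
      _ = 1 := by rw [h2]; rfl
  · intro i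
    have hmain : star (U : Matrix (Fin n) (Fin n) ℂ) * A * (U : Matrix (Fin n) (Fin n) ℂ)
        = star W * ((Matrix.diagonal (RCLike.ofReal ∘ hA.eigenvalues)
            : Matrix (Fin n) (Fin n) ℂ) * W) := by
      conv_lhs => rw [hA.spectral_theorem, Unitary.conjStarAlgAut_apply]
      rw [hsW, hW]
      simp only [Matrix.mul_assoc, Unitary.coe_star]
      rfl
    rw [hmain, Matrix.mul_apply, Complex.re_sum]
    refine Finset.sum_congr rfl fun j _ => ?_
    rw [Matrix.diagonal_mul, Matrix.star_apply, Complex.star_def, Function.comp_apply]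
    have hid : (starRingEnd ℂ) (W j i) * ((RCLike.ofReal (hA.eigenvalues j) : ℂ) * W j i)
        = ((hA.eigenvalues j * Complex.normSq (W j i) : ℝ) : ℂ) := by
      rw [show (starRingEnd ℂ) (W j i) * ((RCLike.ofReal (hA.eigenvalues j) : ℂ) * W j i)
          = (RCLike.ofReal (hA.eigenvalues j) : ℂ) * ((starRingEnd ℂ) (W j i) * W j i) from by
        ring, ← Complex.normSq_eq_conj_mul_self]
      push_cast
      rfl
    rw [hid, Complex.ofReal_re]
    ring


open Filter Topology

private lemma tendsto_prod_h {n : ℕ} {h : ℝ → ℝ}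
    (hcwa : ∀ x : ℝ, 0 ≤ x → ContinuousWithinAt h (Set.Ici 0) x)
    (v : Fin n → ℝ) (hv : ∀ i, 0 ≤ v i) (c : ℝ) (hc : 0 < c) :
    Tendsto (fun ε : ℝ => (∏ i, h (v i + c * ε)) ^ (1/(n:ℝ)))
      (nhdsWithin 0 (Set.Ioi 0)) (nhds ((∏ i, h (v i)) ^ (1/(n:ℝ)))) := by
  have hterm : ∀ i : Fin n, Tendsto (fun ε : ℝ => h (v i + c * ε))
      (nhdsWithin 0 (Set.Ioi 0)) (nhds (h (v i))) := by
    intro i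
    have hinner : Tendsto (fun ε : ℝ => v i + c * ε) (nhdsWithin 0 (Set.Ioi 0))
        (nhdsWithin (v i) (Set.Ici 0)) := by
      rw [tendsto_nhdsWithin_iff]
      constructor
      · have : Tendsto (fun ε : ℝ => v i + c * ε) (nhds 0) (nhds (v i + c * 0)) := by
          exact ((continuous_const.add (continuous_const.mul continuous_id)).tendsto 0)
        rw [mul_zero, add_zero] at this
        exact this.mono_left nhdsWithin_le_nhds
      · filter_upwards [self_mem_nhdsWithin] with ε (hε : 0 < ε)
        have hm := mul_pos hc hε
        have : 0 ≤ v i + c * ε := by linarith [hv i]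
        exact this
    exact (hcwa (v i) (hv i)).tendsto.comp hinner
  have hprod : Tendsto (fun ε : ℝ => ∏ i, h (v i + c * ε))
      (nhdsWithin 0 (Set.Ioi 0)) (nhds (∏ i, h (v i))) :=
    tendsto_finset_prod _ (fun i _ => hterm i)
  exact ((Real.continuousAt_rpow_const _ _ (Or.inr (by positivity))).tendsto.comp hprod)

open Filter Topology in
/-- If `h : [0,∞) → [0,∞)` is superadditive, strictly positive and `C²`
on `(0,∞)`, and strictly log-concave there (`(log h)'' < 0`), then for positive
semidefinite `A, B` (`n ≥ 1`), `det(h(A+B))^{1/n} ≥ det(h(A))^{1/n} + det(h(B))^{1/n}`. -/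
theorem det_root_logConcave_superadditive {n : ℕ} (hn : 0 < n) (h : ℝ → ℝ)
    (h_nonneg : ∀ x ∈ Set.Ici (0:ℝ), 0 ≤ h x)
    (h_superadd : ∀ a b : ℝ, 0 ≤ a → 0 ≤ b → h a + h b ≤ h (a + b))
    (h_pos : ∀ t ∈ Set.Ioi (0:ℝ), 0 < h t)
    (h_C2 : ContDiffOn ℝ 2 h (Set.Ioi 0))
    (h_logconcave : ∀ t ∈ Set.Ioi (0:ℝ),
      deriv (deriv (fun s => Real.log (h s))) t < 0)
    (A B : Matrix (Fin n) (Fin n) ℂ) (hA : A.PosSemidef) (hB : B.PosSemidef) :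
    (cfc h A).det.re ^ (1 / (n:ℝ)) + (cfc h B).det.re ^ (1 / (n:ℝ)) ≤
      (cfc h (A + B)).det.re ^ (1 / (n:ℝ)) := by
  have hAh : A.IsHermitian := hA.1
  have hBh : B.IsHermitian := hB.1
  have hRh : (A + B).IsHermitian := (hA.add hB).1
  set U := hRh.eigenvectorUnitary with hU
  set γ := hRh.eigenvalues with hγ
  set α := hAh.eigenvalues with hα
  set β := hBh.eigenvalues with hβ
  obtain ⟨s, hs0, hsrow, hscol, hsa⟩ := conj_diag_decomp hAh U
  obtain ⟨t, ht0, htrow, htcol, htb⟩ := conj_diag_decomp hBh U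
  set a : Fin n → ℝ := fun i => ((star (U : Matrix (Fin n) (Fin n) ℂ) * A * U) i i).re with haa
  set b : Fin n → ℝ := fun i => ((star (U : Matrix (Fin n) (Fin n) ℂ) * B * U) i i).re with hbb
  have hab : ∀ i, a i + b i = γ i := by
    intro i
    have hsplit : star (U : Matrix (Fin n) (Fin n) ℂ) * A * U
        + star (U : Matrix (Fin n) (Fin n) ℂ) * B * U
        = star (U : Matrix (Fin n) (Fin n) ℂ) * (A + B) * U := by
      rw [Matrix.mul_add, Matrix.add_mul]
    have hdiag := hRh.conjStarAlgAut_star_eigenvectorUnitary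
    rw [Unitary.conjStarAlgAut_star_apply] at hdiag
    have := congr_fun (congr_fun (hsplit.trans hdiag) i) i
    rw [Matrix.add_apply] at this
    have := congr_arg Complex.re this
    rw [Complex.add_re] at this
    rw [haa, hbb]
    simp only at this ⊢
    rw [this, Matrix.diagonal_apply_eq, Function.comp_apply]
    exact Complex.ofReal_re _
  have gcc := logh_concave h_pos h_C2 h_logconcave
  have hcwa := h_cwa h_nonneg h_superadd h_C2
  have hαn : ∀ j, 0 ≤ α j := fun j => hA.eigenvalues_nonneg j
  have hβn : ∀ j, 0 ≤ β j := fun j => hB.eigenvalues_nonneg j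
  have hγn : ∀ i, 0 ≤ γ i := fun i => (hA.add hB).eigenvalues_nonneg i
  have hmain : ∀ ε : ℝ, ε ∈ Set.Ioi (0:ℝ) →
      (∏ j, h (α j + 1 * ε)) ^ (1/(n:ℝ)) + (∏ j, h (β j + 1 * ε)) ^ (1/(n:ℝ)) ≤
        (∏ i, h (γ i + 2 * ε)) ^ (1/(n:ℝ)) := by
    intro ε hε
    rw [Set.mem_Ioi] at hε
    have hshift : ∀ (w : Fin n → Fin n → ℝ) (v : Fin n → ℝ) (d : Fin n → ℝ),
        (∀ i, ∑ j, w i j = 1) → (∀ i, d i = ∑ j, w i j * v j) →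
        ∀ i, d i + 1 * ε = ∑ j, w i j * (v j + 1 * ε) := by
      intro w v d hrow hd i
      rw [hd i]
      rw [show (∑ j, w i j * (v j + 1 * ε)) = (∑ j, w i j * v j) + (∑ j, w i j) * ε by
        rw [Finset.sum_mul, ← Finset.sum_add_distrib]
        exact Finset.sum_congr rfl fun j _ => by ring]
      rw [hrow i]
    have hcore := scalar_core hn h_superadd h_pos gcc
      (fun j => α j + 1 * ε) (fun j => β j + 1 * ε)
      (fun j => by have := hαn j; linarith)
      (fun j => by have := hβn j; linarith)
      s t hs0 ht0 hsrow hscol htrow htcol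
      (fun i => a i + 1 * ε) (fun i => b i + 1 * ε)
      (hshift s α a hsrow hsa) (hshift t β b htrow htb)
    have heq : (∏ i, h ((a i + 1 * ε) + (b i + 1 * ε))) = ∏ i, h (γ i + 2 * ε) := by
      refine Finset.prod_congr rfl fun i _ => ?_
      rw [show (a i + 1 * ε) + (b i + 1 * ε) = (a i + b i) + 2 * ε by ring, hab i]
    rw [heq] at hcore
    exact hcore
  have hLA := tendsto_prod_h hcwa α hαn 1 one_pos
  have hLB := tendsto_prod_h hcwa β hβn 1 one_pos
  have hRG := tendsto_prod_h hcwa γ hγn 2 two_pos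
  have hfin := le_of_tendsto_of_tendsto (hLA.add hLB) hRG
    (Filter.eventually_of_mem self_mem_nhdsWithin hmain)
  rw [det_cfc_re hAh h, det_cfc_re hBh h, det_cfc_re hRh h]
  exact hfin
end

section
/- Let f : [0,∞) → [0,∞) be concave and let p ∈ (1,∞) be such that f^p is superadditive, i.e. f(a+b)^p ≥ f(a)^p + f(b)^p for all a, b ≥ 0. Then for every m×m positive semidefinite complex matrix A = [a_{ij}], Tr f(A) ≥ (∑_{i=1}^m f(a_{ii})^p)^{1/p}. -/
open scoped Matrix ComplexOrder

private lemma superadd_sum {ι : Type*} (F : ℝ → ℝ) (h0 : 0 ≤ F 0)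
    (hsup : ∀ a b : ℝ, 0 ≤ a → 0 ≤ b → F a + F b ≤ F (a + b))
    (s : Finset ι) (g : ι → ℝ) (hg : ∀ i, 0 ≤ g i) :
    ∑ i ∈ s, F (g i) ≤ F (∑ i ∈ s, g i) := by
  induction s using Finset.cons_induction with
  | empty => simpa
  | cons a s ha ih =>
      rw [Finset.sum_cons, Finset.sum_cons]
      calc F (g a) + ∑ i ∈ s, F (g i) ≤ F (g a) + F (∑ i ∈ s, g i) := by linarith
        _ ≤ F (g a + ∑ i ∈ s, g i) :=
          hsup _ _ (hg a) (Finset.sum_nonneg fun i _ => hg i)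

private lemma concave_subadd (f : ℝ → ℝ)
    (hf_nonneg : ∀ x ∈ Set.Ici (0:ℝ), 0 ≤ f x)
    (hf_concave : ConcaveOn ℝ (Set.Ici 0) f) :
    ∀ a b : ℝ, 0 ≤ a → 0 ≤ b → f (a + b) ≤ f a + f b := by
  intro a b ha hb
  rcases eq_or_lt_of_le (by positivity : (0:ℝ) ≤ a + b) with h | h
  · have ha0 : a = 0 := by linarith
    have hb0 : b = 0 := by linarith
    subst ha0; subst hb0
    simpa using hf_nonneg 0 Set.self_mem_Ici
  · set s := a + b with hs
    have hsa : (a / s) • f s + (b / s) • f 0 ≤ f ((a / s) • s + (b / s) • (0:ℝ)) :=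
      hf_concave.2 (le_of_lt h) Set.self_mem_Ici (by positivity) (by positivity)
        (by field_simp; try linarith)
    have hsb : (b / s) • f s + (a / s) • f 0 ≤ f ((b / s) • s + (a / s) • (0:ℝ)) :=
      hf_concave.2 (le_of_lt h) Set.self_mem_Ici (by positivity) (by positivity)
        (by field_simp; try linarith)
    have hf0 : 0 ≤ f 0 := hf_nonneg 0 Set.self_mem_Ici
    have h1 : (a / s) * f s ≤ f a := by
      have : (a / s) • s + (b / s) • (0:ℝ) = a := by rw [smul_eq_mul, smul_eq_mul, mul_zero, add_zero]; field_simp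
      rw [this] at hsa
      have : 0 ≤ (b / s) * f 0 := by positivity
      simp only [smul_eq_mul] at hsa
      linarith
    have h2 : (b / s) * f s ≤ f b := by
      have : (b / s) • s + (a / s) • (0:ℝ) = b := by rw [smul_eq_mul, smul_eq_mul, mul_zero, add_zero]; field_simp
      rw [this] at hsb
      have : 0 ≤ (a / s) * f 0 := by positivity
      simp only [smul_eq_mul] at hsb
      linarith
    have : (a / s) * f s + (b / s) * f s = f s := by
      field_simp
      ring
    linarith

private lemma subadd_sum {ι : Type*} (f : ℝ → ℝ)
    (hsub : ∀ a b : ℝ, 0 ≤ a → 0 ≤ b → f (a + b) ≤ f a + f b)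
    (s : Finset ι) (hs : s.Nonempty) (g : ι → ℝ) (hg : ∀ i, 0 ≤ g i) :
    f (∑ i ∈ s, g i) ≤ ∑ i ∈ s, f (g i) := by
  induction hs using Finset.Nonempty.cons_induction with
  | singleton a => simp
  | cons a s ha hs ih =>
      rw [Finset.sum_cons, Finset.sum_cons]
      calc f (g a + ∑ i ∈ s, g i) ≤ f (g a) + f (∑ i ∈ s, g i) :=
            hsub _ _ (hg a) (Finset.sum_nonneg fun i _ => hg i)
        _ ≤ _ := by linarith

private lemma trace_hermitian_cfc {m : ℕ} {A : Matrix (Fin m) (Fin m) ℂ}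
    (hA : A.IsHermitian) (f : ℝ → ℝ) :
    (hA.cfc f).trace = ∑ i, (f (hA.eigenvalues i) : ℂ) := by
  rw [Matrix.IsHermitian.cfc, Unitary.conjStarAlgAut_apply, Matrix.trace_mul_cycle,
    Unitary.star_mul_self_of_mem (SetLike.coe_mem _), one_mul, Matrix.trace_diagonal]
  rfl

/-- If `f : [0,∞) → [0,∞)` is concave and `p ∈ (1,∞)` is such that
`f^p` is superadditive, then for every positive semidefinite `A = [a_{ij}]`,
`Tr f(A) ≥ (∑ i, f(a_{ii})^p)^{1/p}`. -/
theorem trace_concave_diagonal_bound {m : ℕ} (f : ℝ → ℝ)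
    (hf_nonneg : ∀ x ∈ Set.Ici (0:ℝ), 0 ≤ f x)
    (hf_concave : ConcaveOn ℝ (Set.Ici 0) f)
    (p : ℝ) (hp : 1 < p)
    (hfp_superadd : ∀ a b : ℝ, 0 ≤ a → 0 ≤ b → f a ^ p + f b ^ p ≤ f (a + b) ^ p)
    (A : Matrix (Fin m) (Fin m) ℂ) (hA : A.PosSemidef) :
    (∑ i, f ((A i i).re) ^ p) ^ (1 / p) ≤ (cfc f A).trace.re := by
  have hH : A.IsHermitian := hA.isHermitian
  -- RHS equals sum of f over eigenvalues
  have hRHS : (cfc f A).trace.re = ∑ i, f (hH.eigenvalues i) := by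
    rw [hH.cfc_eq, trace_hermitian_cfc]
    simp
  -- diagonal entries are nonnegative
  have hdiag : ∀ i, 0 ≤ (A i i).re := by
    intro i
    have := hA.re_dotProduct_nonneg (Pi.single i 1)
    simpa [dotProduct, Matrix.mulVec, Pi.single_apply, Finset.sum_ite_eq,
      Finset.sum_ite_eq'] using this
  have heig : ∀ i, 0 ≤ hH.eigenvalues i := fun i => hA.eigenvalues_nonneg i
  -- trace identity: sum of diagonal real parts = sum of eigenvalues
  have htrace : ∑ i, (A i i).re = ∑ i, hH.eigenvalues i := by
    have h1 : A.trace = ∑ i, (hH.eigenvalues i : ℂ) := by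
      have : A.trace = (hH.cfc id).trace := by
        conv_lhs => rw [hH.spectral_theorem]
        rfl
      rw [this, trace_hermitian_cfc]; rfl
    have h2 : A.trace.re = ∑ i, hH.eigenvalues i := by
      rw [h1]; simp
    rw [← h2, Matrix.trace]
    simp [Matrix.diag]
  rw [hRHS]
  have hp0 : 0 < p := by linarith
  -- step 1: superadditivity of f^p
  have hstep1 : ∑ i, f ((A i i).re) ^ p ≤ f (∑ i, (A i i).re) ^ p := by
    refine superadd_sum (fun x => f x ^ p) ?_ hfp_superadd Finset.univ _ hdiag
    have := hf_nonneg 0 Set.self_mem_Ici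
    positivity
  have hT : 0 ≤ ∑ i, (A i i).re := Finset.sum_nonneg fun i _ => hdiag i
  have hfT : 0 ≤ f (∑ i, (A i i).re) := hf_nonneg _ hT
  have hstep1' : (∑ i, f ((A i i).re) ^ p) ^ (1/p) ≤ f (∑ i, (A i i).re) := by
    have h := Real.rpow_le_rpow (Finset.sum_nonneg fun i _ => by
        have := hf_nonneg _ (hdiag i); positivity) hstep1 (by positivity : (0:ℝ) ≤ 1/p)
    calc (∑ i, f ((A i i).re) ^ p) ^ (1/p)
        ≤ (f (∑ i, (A i i).re) ^ p) ^ (1/p) := h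
      _ = f (∑ i, (A i i).re) := by
        rw [← Real.rpow_mul hfT, mul_one_div_cancel (ne_of_gt hp0), Real.rpow_one]
  -- step 2: subadditivity of f
  have hsub := concave_subadd f hf_nonneg hf_concave
  rcases Nat.eq_zero_or_pos m with hm | hm
  · subst hm
    simp only [Finset.univ_eq_empty, Finset.sum_empty]
    rw [Real.zero_rpow (by positivity)]
  · have hne : (Finset.univ : Finset (Fin m)).Nonempty := ⟨⟨0, hm⟩, Finset.mem_univ _⟩
    have hstep2 : f (∑ i, hH.eigenvalues i) ≤ ∑ i, f (hH.eigenvalues i) :=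
      subadd_sum f hsub Finset.univ hne _ heig
    rw [htrace] at hstep1'
    linarith
end
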